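/- Fix an integer d ≥ 3. For n ∈ ℕ let H_n(z) = ∑_{k=0}^n A_{n,k} z^k be the polynomial defined by the recurrence A_{n,n} = 1, A_{n,k-1} = -(2k(2k+d-2)/(n-k+1))·A_{n,k}. Then for every n ∈ ℕ and all z ∈ ℝ, the monomial inversion identity z^n = ∑_{k=0}^n |A_{n,k}|·H_k(z) holds. -/

import Mathlib

open Finset

private def cc (d : ℕ) (m : ℕ) : ℝ := 2 * m * (2 * m + d - 2)

private lemma cc_pos (d : ℕ) (hd : 3 ≤ d) (m : ℕ) (hm : 1 ≤ m) : 0 < cc d m := by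
  unfold cc
  have h1 : (1:ℝ) ≤ m := by exact_mod_cast hm
  have h2 : (3:ℝ) ≤ d := by exact_mod_cast hd
  nlinarith

private lemma prod_cc_pos (d : ℕ) (hd : 3 ≤ d) (j k : ℕ) :
    0 < ∏ i ∈ range j, cc d (k + 1 + i) :=
  Finset.prod_pos (fun i _ => cc_pos d hd _ (by omega))

private lemma closed_form (d : ℕ) (A : ℕ → ℕ → ℝ)
    (hAn : ∀ n : ℕ, A n n = 1)
    (hArec : ∀ n k : ℕ, 1 ≤ k → k ≤ n →
      A n (k - 1) = -(2 * (k : ℝ) * (2 * (k : ℝ) + (d : ℝ) - 2) / ((n : ℝ) - (k : ℝ) + 1)) * A n k) :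
    ∀ j k : ℕ, A (k + j) k =
      (-1 : ℝ) ^ j * (∏ i ∈ range j, cc d (k + 1 + i)) / (Nat.factorial j) := by
  intro j
  induction j with
  | zero => intro k; simp [hAn]
  | succ j ih =>
    intro k
    have h1 := hArec (k + (j+1)) (k+1) (by omega) (by omega)
    have h2 : (k + 1 : ℕ) - 1 = k := by omega
    rw [h2] at h1
    have h3 : A (k + (j+1)) (k+1) =
        (-1 : ℝ) ^ j * (∏ i ∈ range j, cc d (k + 2 + i)) / (Nat.factorial j) := by
      have := ih (k+1)
      have e : (k + 1) + j = k + (j + 1) := by omega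
      rw [e] at this
      rw [this]
    rw [h1, h3]
    have hden : ((k + (j+1) : ℕ) : ℝ) - ((k+1 : ℕ) : ℝ) + 1 = (j : ℝ) + 1 := by
      push_cast; ring
    rw [hden]
    rw [Finset.prod_range_succ' (fun i => cc d (k + 1 + i)) j]
    have e2 : ∀ i, k + 1 + (i + 1) = k + 2 + i := by omega
    have hprod : (∏ i ∈ range j, cc d (k + 1 + (i + 1))) = ∏ i ∈ range j, cc d (k + 2 + i) := by
      apply Finset.prod_congr rfl; intro i _; rw [e2 i]
    rw [hprod]
    have hcc0 : cc d (k + 1 + 0) = 2 * ((k:ℝ)+1) * (2 * ((k:ℝ)+1) + (d:ℝ) - 2) := by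
      unfold cc; push_cast; ring
    rw [hcc0]
    rw [Nat.factorial_succ]
    have hj : (Nat.factorial j : ℝ) ≠ 0 := by
      exact_mod_cast Nat.factorial_ne_zero j
    have hj1 : ((j:ℝ) + 1) ≠ 0 := by positivity
    push_cast
    field_simp
    ring

private lemma abs_closed_form (d : ℕ) (hd : 3 ≤ d) (A : ℕ → ℕ → ℝ)
    (hAn : ∀ n : ℕ, A n n = 1)
    (hArec : ∀ n k : ℕ, 1 ≤ k → k ≤ n →
      A n (k - 1) = -(2 * (k : ℝ) * (2 * (k : ℝ) + (d : ℝ) - 2) / ((n : ℝ) - (k : ℝ) + 1)) * A n k) :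
    ∀ j k : ℕ, |A (k + j) k| =
      (∏ i ∈ range j, cc d (k + 1 + i)) / (Nat.factorial j) := by
  intro j k
  rw [closed_form d A hAn hArec j k]
  rw [abs_div, abs_mul, abs_pow, abs_neg, abs_one, one_pow, one_mul]
  rw [abs_of_pos (prod_cc_pos d hd j k), abs_of_pos]
  exact_mod_cast Nat.factorial_pos j

private lemma choose_sum_real (N : ℕ) :
    ∑ m ∈ range (N + 1),
      (-1 : ℝ) ^ m / ((Nat.factorial (N - m)) * (Nat.factorial m)) =
      if N = 0 then 1 else 0 := by
  have key : (∑ m ∈ range (N + 1), (-1 : ℝ) ^ m * (N.choose m)) =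
      if N = 0 then 1 else 0 := by
    have h := Int.alternating_sum_range_choose (n := N)
    have h2 := congrArg (fun x : ℤ => (x : ℝ)) h
    push_cast at h2
    simpa using h2
  have hN : (Nat.factorial N : ℝ) ≠ 0 := by exact_mod_cast Nat.factorial_ne_zero N
  have step : ∀ m ∈ range (N + 1),
      (-1 : ℝ) ^ m / ((Nat.factorial (N - m)) * (Nat.factorial m)) =
      (-1 : ℝ) ^ m * (N.choose m) / (Nat.factorial N) := by
    intro m hm
    simp only [mem_range] at hm
    have hle : m ≤ N := by omega
    have := Nat.choose_mul_factorial_mul_factorial hle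
    have hcast : (N.choose m : ℝ) * (Nat.factorial m) * (Nat.factorial (N - m)) =
        (Nat.factorial N) := by exact_mod_cast congrArg (fun x : ℕ => (x : ℝ)) this
    have h1 : (Nat.factorial m : ℝ) ≠ 0 := by exact_mod_cast Nat.factorial_ne_zero m
    have h2 : (Nat.factorial (N - m) : ℝ) ≠ 0 := by exact_mod_cast Nat.factorial_ne_zero (N - m)
    field_simp
    linear_combination (-1:ℝ) * hcast
  rw [Finset.sum_congr rfl step, ← Finset.sum_div, key]
  split
  · next h => subst h; simp
  · simp

theorem kummer_monomial_inversion
    (d : ℕ) (hd : 3 ≤ d)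
    (A : ℕ → ℕ → ℝ)
    (hAn : ∀ n : ℕ, A n n = 1)
    (hArec : ∀ n k : ℕ, 1 ≤ k → k ≤ n →
      A n (k - 1) = -(2 * (k : ℝ) * (2 * (k : ℝ) + (d : ℝ) - 2) / ((n : ℝ) - (k : ℝ) + 1)) * A n k)
    (H : ℕ → ℝ → ℝ)
    (hH : ∀ n : ℕ, ∀ z : ℝ, H n z = ∑ k ∈ Finset.range (n + 1), A n k * z ^ k) :
    ∀ n : ℕ, ∀ z : ℝ, z ^ n = ∑ k ∈ Finset.range (n + 1), |A n k| * H k z := by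
  intro n z
  -- expand H and distribute
  have expand : ∑ k ∈ range (n + 1), |A n k| * H k z =
      ∑ k ∈ range (n + 1), ∑ j ∈ range (k + 1), |A n k| * A k j * z ^ j := by
    apply Finset.sum_congr rfl
    intro k _
    rw [hH k z, Finset.mul_sum]
    apply Finset.sum_congr rfl
    intro j _
    ring
  rw [expand]
  -- swap sums
  rw [Finset.sum_comm' (s := range (n+1)) (t := fun k => range (k+1))
    (t' := range (n+1)) (s' := fun j => Ico j (n+1))
    (by intro k j; simp only [mem_range, mem_Ico]; omega)]
  -- evaluate inner sums
  have inner : ∀ j ∈ range (n + 1),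
      (∑ k ∈ Ico j (n + 1), |A n k| * A k j * z ^ j) =
      if j = n then z ^ n else 0 := by
    intro j hj
    simp only [mem_range] at hj
    have hjn : j ≤ n := by omega
    rw [Finset.sum_Ico_eq_sum_range]
    have hN : n + 1 - j = (n - j) + 1 := by omega
    rw [hN]
    set N := n - j with hNdef
    have term : ∀ m ∈ range (N + 1),
        |A n (j + m)| * A (j + m) j * z ^ j =
        ((∏ i ∈ range N, cc d (j + 1 + i)) * z ^ j) *
          ((-1 : ℝ) ^ m / ((Nat.factorial (N - m)) * (Nat.factorial m))) := by
      intro m hm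
      simp only [mem_range] at hm
      have hmN : m ≤ N := by omega
      have e1 : n = (j + m) + (N - m) := by omega
      have h1 : |A n (j + m)| =
          (∏ i ∈ range (N - m), cc d (j + m + 1 + i)) / (Nat.factorial (N - m)) := by
        rw [e1]; exact abs_closed_form d hd A hAn hArec (N - m) (j + m)
      have h2 : A (j + m) j =
          (-1 : ℝ) ^ m * (∏ i ∈ range m, cc d (j + 1 + i)) / (Nat.factorial m) :=
        closed_form d A hAn hArec m j
      rw [h1, h2]
      have hmerge : (∏ i ∈ range m, cc d (j + 1 + i)) *
          (∏ i ∈ range (N - m), cc d (j + m + 1 + i)) =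
          ∏ i ∈ range N, cc d (j + 1 + i) := by
        have base := Finset.prod_range_add (fun i => cc d (j + 1 + i)) m (N - m)
        have e2 : m + (N - m) = N := by omega
        rw [e2] at base
        rw [base]
        congr 1
        apply Finset.prod_congr rfl
        intro i _
        congr 1
        omega
      rw [← hmerge]
      ring
    rw [Finset.sum_congr rfl term, ← Finset.mul_sum, choose_sum_real N]
    by_cases h : j = n
    · subst h
      have : N = 0 := by omega
      rw [this]
      simp
    · have : N ≠ 0 := by omega
      simp [h, this]
  rw [Finset.sum_congr rfl inner, Finset.sum_ite_eq' (range (n+1)) n (fun _ => z ^ n)]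
  simp
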